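/- Let ε : Ω → ℝⁿ be a square-integrable random vector with mean zero and E(ε εᵀ) = σ² Iₙ, let ε* be a real random variable with mean 0 and variance σ², let x* : Ω → T be a random element, and assume ε, ε*, x* are mutually independent. Let μ_vec ∈ ℝⁿ be fixed, let μ : T → ℝ and h : T → ℝⁿ be measurable with E(μ(x*)²) < ∞ and E‖h(x*)‖² < ∞, and set y* = μ(x*) + ε* and ŷ* = h(x*)ᵀ(μ_vec + ε). Then E[(y* − ŷ*)²] = σ² + E[(μ(x*) − h(x*)ᵀ μ_vec)²] + σ²·E[‖h(x*)‖²]. -/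

import Mathlib

open Matrix MeasureTheory ProbabilityTheory

/-- Two functions in L² have integrable product. -/
lemma l2_mul_integrable' {Ω : Type*} [MeasurableSpace Ω] {P : Measure Ω}
    {f g : Ω → ℝ} (hf : MemLp f 2 P) (hg : MemLp g 2 P) :
    Integrable (fun ω => f ω * g ω) P := by
  have hint : Integrable (fun ω => f ω ^ 2 + g ω ^ 2) P :=
    hf.integrable_sq.add hg.integrable_sq
  refine hint.mono (hf.aestronglyMeasurable.mul hg.aestronglyMeasurable) ?_
  filter_upwards with ω
  rw [Real.norm_eq_abs, Real.norm_eq_abs, abs_mul,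
    abs_of_nonneg (show (0:ℝ) ≤ f ω ^ 2 + g ω ^ 2 by positivity)]
  nlinarith [sq_nonneg (|f ω| - |g ω|), abs_nonneg (f ω), abs_nonneg (g ω),
    sq_abs (f ω), sq_abs (g ω)]

/-- **Random-X bias–variance decomposition.**
With `y* = μ(x*) + ε*` and `ŷ* = h(x*)ᵀ(μ_vec + ε)`, where `ε` has mean zero and
second-moment matrix `σ² Iₙ`, `ε*` has mean zero and variance `σ²`, and `ε, ε*, x*` are
mutually independent:
`E[(y* − ŷ*)²] = σ² + E[(μ(x*) − h(x*)ᵀμ_vec)²] + σ²·E[‖h(x*)‖²]`. -/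
theorem randomX_bias_variance_decomposition
    {Ω T : Type*} [MeasurableSpace Ω] [MeasurableSpace T]
    (P : Measure Ω) [IsProbabilityMeasure P]
    {n : ℕ} (σ2 : ℝ)
    (ε : Ω → Fin n → ℝ) (hεmeas : Measurable ε)
    (hεL2 : ∀ i, MemLp (fun ω => ε ω i) 2 P)
    (hεmean : ∀ i, ∫ ω, ε ω i ∂P = 0)
    (hεmom : ∀ i j, ∫ ω, ε ω i * ε ω j ∂P = σ2 * (1 : Matrix (Fin n) (Fin n) ℝ) i j)
    (εstar : Ω → ℝ) (hεstarmeas : Measurable εstar)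
    (hεstarL2 : MemLp εstar 2 P)
    (hεstarmean : ∫ ω, εstar ω ∂P = 0)
    (hεstarvar : ∫ ω, (εstar ω) ^ 2 ∂P = σ2)
    (xstar : Ω → T) (hxmeas : Measurable xstar)
    (hindep₁ : IndepFun ε εstar P)
    (hindep₂ : IndepFun (fun ω => (ε ω, εstar ω)) xstar P)
    (μvec : Fin n → ℝ)
    (μ : T → ℝ) (hμmeas : Measurable μ)
    (hμL2 : MemLp (fun ω => μ (xstar ω)) 2 P)
    (h : T → Fin n → ℝ) (hhmeas : Measurable h)
    (hhint : Integrable (fun ω => ∑ i, (h (xstar ω) i) ^ 2) P)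
    (ystar yhat : Ω → ℝ)
    (hystar : ∀ ω, ystar ω = μ (xstar ω) + εstar ω)
    (hyhat : ∀ ω, yhat ω = h (xstar ω) ⬝ᵥ (μvec + ε ω)) :
    ∫ ω, (ystar ω - yhat ω) ^ 2 ∂P =
      σ2 + (∫ ω, (μ (xstar ω) - h (xstar ω) ⬝ᵥ μvec) ^ 2 ∂P) +
        σ2 * ∫ ω, ∑ i, (h (xstar ω) i) ^ 2 ∂P := by
  classical
  -- abbreviations
  set B : Ω → ℝ := fun ω => μ (xstar ω) - h (xstar ω) ⬝ᵥ μvec with hBdef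
  set S : Ω → ℝ := fun ω => h (xstar ω) ⬝ᵥ ε ω with hSdef
  -- measurability of building blocks on T
  have hdotT : Measurable (fun t => h t ⬝ᵥ μvec) := by
    simp only [dotProduct]
    exact Finset.measurable_sum _ fun i _ => ((measurable_pi_apply i).comp hhmeas).mul_const _
  have hBT : Measurable (fun t => μ t - h t ⬝ᵥ μvec) := hμmeas.sub hdotT
  have hHiT : ∀ i : Fin n, Measurable (fun t => h t i) :=
    fun i => (measurable_pi_apply i).comp hhmeas
  -- measurability of building blocks on Ω
  have hHi : ∀ i : Fin n, Measurable (fun ω => h (xstar ω) i) := fun i => (hHiT i).comp hxmeas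
  have hEi : ∀ i : Fin n, Measurable (fun ω => ε ω i) := fun i => (measurable_pi_apply i).comp hεmeas
  have hBmeas : Measurable B := hBT.comp hxmeas
  have hSmeas : Measurable S := by
    simp only [hSdef, dotProduct]
    exact Finset.measurable_sum _ fun i _ => (hHi i).mul (hEi i)
  -- L² facts
  have hHiL2 : ∀ i : Fin n, MemLp (fun ω => h (xstar ω) i) 2 P := by
    intro i
    refine (memLp_two_iff_integrable_sq (hHi i).aestronglyMeasurable).2 ?_
    refine hhint.mono ((hHi i).pow_const 2).aestronglyMeasurable ?_
    filter_upwards with ω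
    rw [Real.norm_eq_abs, Real.norm_eq_abs, abs_of_nonneg (by positivity),
      abs_of_nonneg (by positivity)]
    exact Finset.single_le_sum (f := fun j => h (xstar ω) j ^ 2)
      (fun j _ => sq_nonneg _) (Finset.mem_univ i)
  have hdotL2 : MemLp (fun ω => h (xstar ω) ⬝ᵥ μvec) 2 P := by
    simp only [dotProduct]
    refine memLp_finset_sum _ fun i _ => ?_
    have h2 : MemLp (fun ω => μvec i * h (xstar ω) i) 2 P := (hHiL2 i).const_mul (μvec i)
    simpa [mul_comm] using h2
  have hBL2 : MemLp B 2 P := hμL2.sub hdotL2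
  have hHiEiL2 : ∀ i : Fin n, MemLp (fun ω => h (xstar ω) i * ε ω i) 2 P := by
    intro i
    refine (memLp_two_iff_integrable_sq (f := fun ω => h (xstar ω) i * ε ω i)
      ((hHi i).mul (hEi i)).aestronglyMeasurable).2 ?_
    have hsq : (fun ω => (h (xstar ω) i * ε ω i) ^ 2)
        = fun ω => (fun t => h t i ^ 2) (xstar ω) * (fun p : (Fin n → ℝ) × ℝ => p.1 i ^ 2) (ε ω, εstar ω) := by
      funext ω; ring
    rw [hsq]
    have hind : IndepFun (fun ω => (fun t => h t i ^ 2) (xstar ω))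
        (fun ω => (fun p : (Fin n → ℝ) × ℝ => p.1 i ^ 2) (ε ω, εstar ω)) P :=
      (hindep₂.comp (((measurable_pi_apply i).comp measurable_fst).pow_const 2)
        ((hHiT i).pow_const 2)).symm
    exact hind.integrable_mul (hHiL2 i).integrable_sq (hεL2 i).integrable_sq
  have hSL2 : MemLp S 2 P := by
    have : S = fun ω => ∑ i, h (xstar ω) i * ε ω i := by
      funext ω; simp [hSdef, dotProduct]
    rw [this]
    exact memLp_finset_sum _ fun i _ => hHiEiL2 i
  -- generic independence helper
  have hindX : ∀ (f : T → ℝ) (g : (Fin n → ℝ) × ℝ → ℝ), Measurable f → Measurable g →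
      IndepFun (fun ω => f (xstar ω)) (fun ω => g (ε ω, εstar ω)) P :=
    fun f g hf hg => (hindep₂.comp hg hf).symm
  -- cross term 1 : ∫ B ε* = 0
  have hBε : ∫ ω, B ω * εstar ω ∂P = 0 := by
    have hind : IndepFun B εstar P := hindX _ Prod.snd hBT measurable_snd
    have := hind.integral_fun_mul_eq_mul_integral hBmeas.aestronglyMeasurable hεstarmeas.aestronglyMeasurable
    calc ∫ ω, B ω * εstar ω ∂P = (∫ ω, B ω ∂P) * ∫ ω, εstar ω ∂P := this
    _ = 0 := by rw [hεstarmean, mul_zero]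
  -- cross term 2 : ∫ B S = 0
  have hBS : ∫ ω, B ω * S ω ∂P = 0 := by
    have hrw : (fun ω => B ω * S ω) = fun ω => ∑ i, (B ω * h (xstar ω) i) * ε ω i := by
      funext ω; simp [hSdef, dotProduct, Finset.mul_sum, mul_assoc]
    rw [hrw]
    have hint : ∀ i ∈ Finset.univ, Integrable (fun ω => (B ω * h (xstar ω) i) * ε ω i) P := by
      intro i _
      have hind : IndepFun (fun ω => B ω * h (xstar ω) i) (fun ω => ε ω i) P :=
        hindX (fun t => (μ t - h t ⬝ᵥ μvec) * h t i) (fun p => p.1 i)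
          (hBT.mul (hHiT i)) ((measurable_pi_apply i).comp measurable_fst)
      exact hind.integrable_mul (l2_mul_integrable' hBL2 (hHiL2 i)) ((hεL2 i).integrable one_le_two)
    rw [integral_finset_sum _ hint]
    refine Finset.sum_eq_zero fun i _ => ?_
    have hind : IndepFun (fun ω => B ω * h (xstar ω) i) (fun ω => ε ω i) P :=
      hindX (fun t => (μ t - h t ⬝ᵥ μvec) * h t i) (fun p => p.1 i)
        (hBT.mul (hHiT i)) ((measurable_pi_apply i).comp measurable_fst)
    have := hind.integral_fun_mul_eq_mul_integral (hBmeas.mul (hHi i)).aestronglyMeasurable (hEi i).aestronglyMeasurable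
    calc ∫ ω, (B ω * h (xstar ω) i) * ε ω i ∂P
        = (∫ ω, B ω * h (xstar ω) i ∂P) * ∫ ω, ε ω i ∂P := this
    _ = 0 := by rw [hεmean i, mul_zero]
  -- cross term 3 : ∫ ε* S = 0
  have hεS : ∫ ω, εstar ω * S ω ∂P = 0 := by
    have hrw : (fun ω => εstar ω * S ω) = fun ω => ∑ i, h (xstar ω) i * (ε ω i * εstar ω) := by
      funext ω; simp [hSdef, dotProduct, Finset.mul_sum]; ring_nf
    have hindi : ∀ i : Fin n, IndepFun (fun ω => h (xstar ω) i)
        (fun ω => ε ω i * εstar ω) P :=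
      fun i => hindX (fun t => h t i) (fun p => p.1 i * p.2) (hHiT i)
        (((measurable_pi_apply i).comp measurable_fst).mul measurable_snd)
    have hintεε : ∀ i : Fin n, Integrable (fun ω => ε ω i * εstar ω) P :=
      fun i => l2_mul_integrable' (hεL2 i) hεstarL2
    rw [hrw]
    have hint : ∀ i ∈ Finset.univ, Integrable (fun ω => h (xstar ω) i * (ε ω i * εstar ω)) P :=
      fun i _ => (hindi i).integrable_mul ((hHiL2 i).integrable one_le_two) (hintεε i)
    rw [integral_finset_sum _ hint]
    refine Finset.sum_eq_zero fun i _ => ?_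
    have h1 := (hindi i).integral_fun_mul_eq_mul_integral (hHi i).aestronglyMeasurable
      ((hEi i).mul hεstarmeas).aestronglyMeasurable
    have h2 : IndepFun (fun ω => ε ω i) εstar P :=
      hindep₁.comp (measurable_pi_apply i) measurable_id
    have h3 := h2.integral_fun_mul_eq_mul_integral (hEi i).aestronglyMeasurable hεstarmeas.aestronglyMeasurable
    calc ∫ ω, h (xstar ω) i * (ε ω i * εstar ω) ∂P
        = (∫ ω, h (xstar ω) i ∂P) * ∫ ω, ε ω i * εstar ω ∂P := h1
    _ = (∫ ω, h (xstar ω) i ∂P) * ((∫ ω, ε ω i ∂P) * ∫ ω, εstar ω ∂P) := by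
          rw [show ∫ ω, ε ω i * εstar ω ∂P = (∫ ω, ε ω i ∂P) * ∫ ω, εstar ω ∂P from h3]
    _ = 0 := by rw [hεmean i, zero_mul, mul_zero]
  -- second moment of S
  have hS2 : ∫ ω, S ω ^ 2 ∂P = σ2 * ∫ ω, ∑ i, (h (xstar ω) i) ^ 2 ∂P := by
    have hrw : (fun ω => S ω ^ 2)
        = fun ω => ∑ i, ∑ j, (h (xstar ω) i * h (xstar ω) j) * (ε ω i * ε ω j) := by
      funext ω
      simp only [hSdef, dotProduct, sq, Finset.sum_mul_sum]
      exact Finset.sum_congr rfl fun i _ => Finset.sum_congr rfl fun j _ => by ring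
    have hindij : ∀ i j : Fin n, IndepFun (fun ω => h (xstar ω) i * h (xstar ω) j)
        (fun ω => ε ω i * ε ω j) P :=
      fun i j => hindX (fun t => h t i * h t j) (fun p => p.1 i * p.1 j)
        ((hHiT i).mul (hHiT j))
        (((measurable_pi_apply i).comp measurable_fst).mul
          ((measurable_pi_apply j).comp measurable_fst))
    have hintij : ∀ i j : Fin n, Integrable
        (fun ω => (h (xstar ω) i * h (xstar ω) j) * (ε ω i * ε ω j)) P :=
      fun i j => (hindij i j).integrable_mul
        (l2_mul_integrable' (hHiL2 i) (hHiL2 j)) (l2_mul_integrable' (hεL2 i) (hεL2 j))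
    rw [hrw, integral_finset_sum _ fun i _ => integrable_finset_sum _ fun j _ => hintij i j]
    have hterm : ∀ i j : Fin n, ∫ ω, (h (xstar ω) i * h (xstar ω) j) * (ε ω i * ε ω j) ∂P
        = (∫ ω, h (xstar ω) i * h (xstar ω) j ∂P) * (σ2 * (1 : Matrix (Fin n) (Fin n) ℝ) i j) := by
      intro i j
      have := (hindij i j).integral_fun_mul_eq_mul_integral ((hHi i).mul (hHi j)).aestronglyMeasurable
        ((hEi i).mul (hEi j)).aestronglyMeasurable
      calc ∫ ω, (h (xstar ω) i * h (xstar ω) j) * (ε ω i * ε ω j) ∂P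
          = (∫ ω, h (xstar ω) i * h (xstar ω) j ∂P) * ∫ ω, ε ω i * ε ω j ∂P := this
      _ = _ := by rw [hεmom i j]
    calc (∑ i, ∫ ω, ∑ j, (h (xstar ω) i * h (xstar ω) j) * (ε ω i * ε ω j) ∂P)
        = ∑ i, ∑ j, ∫ ω, (h (xstar ω) i * h (xstar ω) j) * (ε ω i * ε ω j) ∂P :=
          Finset.sum_congr rfl fun i _ => integral_finset_sum _ fun j _ => hintij i j
    _ = ∑ i, ∑ j, (∫ ω, h (xstar ω) i * h (xstar ω) j ∂P)
            * (σ2 * (1 : Matrix (Fin n) (Fin n) ℝ) i j) := by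
          exact Finset.sum_congr rfl fun i _ => Finset.sum_congr rfl fun j _ => hterm i j
    _ = ∑ i, σ2 * ∫ ω, (h (xstar ω) i) ^ 2 ∂P := by
          refine Finset.sum_congr rfl fun i _ => ?_
          rw [Finset.sum_eq_single i]
          · simp [Matrix.one_apply, sq, mul_comm]
          · intro j _ hj
            simp [Matrix.one_apply, Ne.symm hj]
          · simp
    _ = σ2 * ∑ i, ∫ ω, (h (xstar ω) i) ^ 2 ∂P := by rw [Finset.mul_sum]
    _ = σ2 * ∫ ω, ∑ i, (h (xstar ω) i) ^ 2 ∂P := by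
          rw [integral_finset_sum _ fun i _ => (hHiL2 i).integrable_sq]
  -- integrability of the six pieces
  have iB2 : Integrable (fun ω => B ω ^ 2) P := hBL2.integrable_sq
  have iε2 : Integrable (fun ω => εstar ω ^ 2) P := hεstarL2.integrable_sq
  have iS2 : Integrable (fun ω => S ω ^ 2) P := hSL2.integrable_sq
  have iBε : Integrable (fun ω => B ω * εstar ω) P := l2_mul_integrable' hBL2 hεstarL2
  have iBS : Integrable (fun ω => B ω * S ω) P := l2_mul_integrable' hBL2 hSL2
  have iεS : Integrable (fun ω => εstar ω * S ω) P := l2_mul_integrable' hεstarL2 hSL2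
  -- main decomposition
  have hmain : (fun ω => (ystar ω - yhat ω) ^ 2)
      = fun ω => (((B ω ^ 2 + εstar ω ^ 2 + S ω ^ 2) + 2 * (B ω * εstar ω))
          - 2 * (B ω * S ω)) - 2 * (εstar ω * S ω) := by
    funext ω
    rw [hystar, hyhat, dotProduct_add]
    simp only [hBdef, hSdef]
    ring
  have i2Bε : Integrable (fun ω => 2 * (B ω * εstar ω)) P := iBε.const_mul 2
  have i2BS : Integrable (fun ω => 2 * (B ω * S ω)) P := iBS.const_mul 2
  have i2εS : Integrable (fun ω => 2 * (εstar ω * S ω)) P := iεS.const_mul 2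
  have iA : Integrable (fun ω => B ω ^ 2 + εstar ω ^ 2) P := iB2.add iε2
  have iA2 : Integrable (fun ω => B ω ^ 2 + εstar ω ^ 2 + S ω ^ 2) P := iA.add iS2
  have iA3 : Integrable (fun ω => (B ω ^ 2 + εstar ω ^ 2 + S ω ^ 2)
      + 2 * (B ω * εstar ω)) P := iA2.add i2Bε
  have iA4 : Integrable (fun ω => ((B ω ^ 2 + εstar ω ^ 2 + S ω ^ 2)
      + 2 * (B ω * εstar ω)) - 2 * (B ω * S ω)) P := iA3.sub i2BS
  rw [hmain, integral_sub iA4 i2εS, integral_sub iA3 i2BS, integral_add iA2 i2Bε,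
    integral_add iA iS2, integral_add iB2 iε2,
    integral_const_mul, integral_const_mul, integral_const_mul,
    hBε, hBS, hεS, hS2, hεstarvar]
  ring
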